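/- Let f, h : ℝ → ℝ with f twice continuously differentiable on [0, ∞) and h continuously differentiable on [0, ∞). Assume h(0) = 0, h(r) > 0 for all r > 0, f'(0) = 0, and f''(r)·h(r) + 2·f'(r)·h'(r) < 0 for every r > 0. Then f'(r) < 0 for every r > 0. (In particular, for a warped product metric dr² + h²(r) g_{S²} + f²(r) g_{S¹} on S¹ × ℝ³ with f > 0, positivity of the Ricci curvature in the S¹ direction means f''/f + 2 f' h'/(f h) < 0 for r > 0, and hence forces f to be strictly decreasing on (0, ∞).) -/

import Mathlib

open Set

/-- The analytic core of the proposition that a warped product metric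
`dr² + h²(r) g_{S²} + f²(r) g_{S¹}` with positive Ricci curvature forces `f` to be
strictly decreasing: if `h(0) = 0`, `h > 0` on `(0,∞)`, `f'(0) = 0`, and
`f''(r) h(r) + 2 f'(r) h'(r) < 0` for all `r > 0` (the Ricci positivity condition
in the circle direction, cleared of the positive denominator `f h`), then
`f'(r) < 0` for all `r > 0`. -/
theorem deriv_neg_of_warped_ricci_pos
    (f f' f'' h h' : ℝ → ℝ)
    (hfderiv : ∀ r ∈ Ici (0 : ℝ), HasDerivAt f (f' r) r)
    (hf'deriv : ∀ r ∈ Ici (0 : ℝ), HasDerivAt f' (f'' r) r)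
    (hf''cont : ContinuousOn f'' (Ici (0 : ℝ)))
    (hhderiv : ∀ r ∈ Ici (0 : ℝ), HasDerivAt h (h' r) r)
    (hh'cont : ContinuousOn h' (Ici (0 : ℝ)))
    (hh0 : h 0 = 0) (hhpos : ∀ r : ℝ, 0 < r → 0 < h r)
    (hf'0 : f' 0 = 0)
    (hricci : ∀ r : ℝ, 0 < r → f'' r * h r + 2 * f' r * h' r < 0) :
    ∀ r : ℝ, 0 < r → f' r < 0 := by
  set g : ℝ → ℝ := fun r => f' r * (h r) ^ 2 with hg
  have hgderiv : ∀ r ∈ Ici (0 : ℝ),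
      HasDerivAt g (f'' r * (h r) ^ 2 + f' r * (2 * h r * h' r)) r := by
    intro r hr
    exact (hf'deriv r hr).mul (((hhderiv r hr).pow 2).congr_deriv (by ring))
  have hanti : StrictAntiOn g (Ici (0 : ℝ)) := by
    apply strictAntiOn_of_deriv_neg (convex_Ici 0)
    · exact fun r hr => (hgderiv r hr).continuousAt.continuousWithinAt
    · intro r hr
      rw [interior_Ici] at hr
      rw [(hgderiv r (Set.mem_Ici.mpr (le_of_lt hr))).deriv]
      have := hricci r hr
      have hh := hhpos r hr
      nlinarith
  intro r hr
  have : g r < g 0 := hanti (Set.mem_Ici.mpr (le_refl 0)) (Set.mem_Ici.mpr (le_of_lt hr)) hr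
  have hg0 : g 0 = 0 := by simp [hg, hf'0]
  rw [hg0] at this
  have hlt : f' r * h r ^ 2 < 0 := this
  have hh := hhpos r hr
  nlinarith [sq_nonneg (h r)]
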